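/- Let ν be a rotation-invariant probability measure on ℝⁿ and let A, B ⊆ ℝⁿ be measurable star-shaped sets with center 0, meaning for every θ ∈ S^{n-1} the set {r ≥ 0 : rθ ∈ A} is an interval containing 0 (and similarly for B). Then ∫_{O(n)} ν(A ∩ U(B)) dm(U) ≥ ν(A)·ν(B), where m is the Haar probability measure on the orthogonal group O(n). -/

import Mathlib

set_option maxHeartbeats 1000000
set_option synthInstance.maxHeartbeats 400000

open MeasureTheory Real Pointwise

instance matMeas (n : ℕ) : MeasurableSpace (Matrix (Fin n) (Fin n) ℝ) :=
  show MeasurableSpace (Fin n → Fin n → ℝ) from inferInstance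

namespace Stmt6Aux

variable {n : ℕ}

/-- `phi U x = U⁻¹ x`. -/
noncomputable def phi (U : Matrix.orthogonalGroup (Fin n) ℝ) (x : Fin n → ℝ) : Fin n → ℝ :=
  ((U⁻¹ : Matrix.orthogonalGroup (Fin n) ℝ) : Matrix (Fin n) (Fin n) ℝ).mulVec x

lemma phi_def (U : Matrix.orthogonalGroup (Fin n) ℝ) :
    phi U = Matrix.mulVec ((U⁻¹ : Matrix.orthogonalGroup (Fin n) ℝ) : Matrix (Fin n) (Fin n) ℝ) :=
  rfl

lemma phi_mul (V U : Matrix.orthogonalGroup (Fin n) ℝ) (x : Fin n → ℝ) :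
    phi (V * U) x = phi U (phi V x) := by
  simp only [phi, Matrix.mulVec_mulVec]
  rw [← MulMemClass.coe_mul, ← mul_inv_rev]

lemma phi_cancel (W V : Matrix.orthogonalGroup (Fin n) ℝ) (x : Fin n → ℝ) :
    phi (W * V) ((W : Matrix (Fin n) (Fin n) ℝ).mulVec x) = phi V x := by
  simp only [phi, Matrix.mulVec_mulVec]
  rw [← MulMemClass.coe_mul]
  rw [mul_inv_rev]
  group

lemma phi_one (x : Fin n → ℝ) : phi (1 : Matrix.orthogonalGroup (Fin n) ℝ) x = x := by
  simp [phi, inv_one]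

lemma phi_mulVec (U : Matrix.orthogonalGroup (Fin n) ℝ) (x : Fin n → ℝ) :
    phi U ((U : Matrix (Fin n) (Fin n) ℝ).mulVec x) = x := by
  simpa [phi_one] using phi_cancel U 1 x

lemma mulVec_phi (U : Matrix.orthogonalGroup (Fin n) ℝ) (x : Fin n → ℝ) :
    (U : Matrix (Fin n) (Fin n) ℝ).mulVec (phi U x) = x := by
  simp only [phi, Matrix.mulVec_mulVec, ← MulMemClass.coe_mul, mul_inv_cancel,
    OneMemClass.coe_one, Matrix.one_mulVec]

lemma phi_smul (U : Matrix.orthogonalGroup (Fin n) ℝ) (t : ℝ) (x : Fin n → ℝ) :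
    phi U (t • x) = t • phi U x := by
  simp [phi, Matrix.mulVec_smul]

lemma measurable_mulVec (M : Matrix (Fin n) (Fin n) ℝ) :
    Measurable (M.mulVec : (Fin n → ℝ) → (Fin n → ℝ)) := by
  apply measurable_pi_lambda
  intro i
  have : (fun x : Fin n → ℝ => M.mulVec x i) = fun x => ∑ j, M i j * x j := by
    funext x; simp [Matrix.mulVec, dotProduct]
  rw [this]
  exact Finset.measurable_sum _ fun j _ => (measurable_pi_apply j).const_mul _

lemma measurable_phi :
    Measurable fun p : (Matrix.orthogonalGroup (Fin n) ℝ) × (Fin n → ℝ) => phi p.1 p.2 := by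
  apply measurable_pi_lambda
  intro i
  have : (fun p : (Matrix.orthogonalGroup (Fin n) ℝ) × (Fin n → ℝ) => phi p.1 p.2 i)
      = fun p => ∑ j, (p.1 : Matrix (Fin n) (Fin n) ℝ) j i * p.2 j := by
    funext p
    simp [phi, Matrix.mulVec, dotProduct, Matrix.UnitaryGroup.inv_val,
      Matrix.star_apply]
  rw [this]
  refine Finset.measurable_sum _ fun j _ => Measurable.mul ?_ ?_
  · exact ((measurable_pi_apply i).comp ((measurable_pi_apply j).comp
      (measurable_subtype_coe.comp measurable_fst)))
  · exact (measurable_pi_apply j).comp measurable_snd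

lemma measurable_phi_left (U : Matrix.orthogonalGroup (Fin n) ℝ) :
    Measurable fun x : Fin n → ℝ => phi U x := by
  have : (fun x : Fin n → ℝ => phi U x) = Matrix.mulVec
      ((U⁻¹ : Matrix.orthogonalGroup (Fin n) ℝ) : Matrix (Fin n) (Fin n) ℝ) := rfl
  rw [this]
  exact measurable_mulVec _

lemma measurable_phi_right (z : Fin n → ℝ) :
    Measurable fun U : Matrix.orthogonalGroup (Fin n) ℝ => phi U z := by
  apply measurable_pi_lambda
  intro i
  have : (fun U : Matrix.orthogonalGroup (Fin n) ℝ => phi U z i)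
      = fun U : Matrix.orthogonalGroup (Fin n) ℝ =>
        ∑ j, (U : Matrix (Fin n) (Fin n) ℝ) j i * z j := by
    funext U
    simp [phi, Matrix.mulVec, dotProduct, Matrix.UnitaryGroup.inv_val,
      Matrix.star_apply]
  rw [this]
  refine Finset.measurable_sum _ fun j _ => Measurable.mul_const ?_ _
  exact ((measurable_pi_apply i).comp ((measurable_pi_apply j).comp measurable_subtype_coe))

lemma measurable_mulLeft (V : Matrix.orthogonalGroup (Fin n) ℝ) :
    Measurable fun U : Matrix.orthogonalGroup (Fin n) ℝ => V * U := by
  have : (fun U : Matrix.orthogonalGroup (Fin n) ℝ => V * U)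
      = fun U : Matrix.orthogonalGroup (Fin n) ℝ => (⟨V.1 * U.1,
          mul_mem V.2 U.2⟩ : Matrix.orthogonalGroup (Fin n) ℝ) := by
    funext U; rfl
  rw [this]
  apply Measurable.subtype_mk
  apply measurable_pi_lambda
  intro i
  apply measurable_pi_lambda
  intro j
  have : (fun U : Matrix.orthogonalGroup (Fin n) ℝ => (V.1 * U.1) i j)
      = fun U : Matrix.orthogonalGroup (Fin n) ℝ => ∑ k, V.1 i k * U.1 k j := by
    funext U; simp [Matrix.mul_apply]
  rw [this]
  refine Finset.measurable_sum _ fun k _ => Measurable.const_mul ?_ _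
  exact (measurable_pi_apply j).comp ((measurable_pi_apply k).comp measurable_subtype_coe)

lemma measurable_ind {γ : Type*} [MeasurableSpace γ] {g : γ → (Fin n → ℝ)}
    (hg : Measurable g) {S : Set (Fin n → ℝ)} (hS : MeasurableSet S) :
    Measurable fun w => S.indicator (1 : (Fin n → ℝ) → ENNReal) (g w) := by
  classical
  have : (fun w => S.indicator (1 : (Fin n → ℝ) → ENNReal) (g w))
      = (g ⁻¹' S).indicator fun _ => (1 : ENNReal) := by
    funext w
    by_cases h : g w ∈ S <;> simp [h, Set.indicator_apply]
  rw [this]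
  exact measurable_const.indicator (hg hS)

lemma sq_sum_zero (z : Fin n → ℝ) (hz : ∑ i, z i ^ 2 = 0) : z = 0 := by
  funext i
  have h := (Finset.sum_eq_zero_iff_of_nonneg (fun j _ => sq_nonneg (z j))).mp hz i
    (Finset.mem_univ i)
  exact (pow_eq_zero_iff two_ne_zero).mp h

lemma exists_orth (x y : Fin n → ℝ) (h : ∑ i, x i ^ 2 = ∑ i, y i ^ 2) :
    ∃ W : Matrix.orthogonalGroup (Fin n) ℝ, (W : Matrix (Fin n) (Fin n) ℝ).mulVec x = y := by
  by_cases hxy : x = y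
  · exact ⟨1, by simp [hxy]⟩
  · set v : Fin n → ℝ := x - y with hv
    have hvne : v ≠ 0 := sub_ne_zero.mpr hxy
    set S : ℝ := ∑ i, v i ^ 2 with hSdef
    have hS : 0 < S := by
      rcases Function.ne_iff.mp hvne with ⟨i, hi⟩
      have hvi : v i ≠ 0 := by simpa using hi
      have h1 : 0 < v i ^ 2 := by positivity
      exact lt_of_lt_of_le h1
        (Finset.single_le_sum (fun j _ => sq_nonneg (v j)) (Finset.mem_univ i))
    set c : ℝ := 2 / S with hc
    set P : Matrix (Fin n) (Fin n) ℝ := Matrix.vecMulVec v v with hP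
    set M : Matrix (Fin n) (Fin n) ℝ := 1 - c • P with hM
    have hPP : P * P = S • P := by
      ext i j
      simp only [Matrix.mul_apply, hP, Matrix.vecMulVec_apply, Matrix.smul_apply, smul_eq_mul]
      calc ∑ k, (v i * v k) * (v k * v j) = ∑ k, (v i * v j) * (v k)^2 :=
            Finset.sum_congr rfl fun k _ => by ring
        _ = (v i * v j) * S := by rw [← Finset.mul_sum, hSdef]
        _ = S * (v i * v j) := mul_comm _ _
    have hcc : c * c * S = c + c := by
      rw [hc]; field_simp; ring
    have hMM : M * M = 1 := by
      rw [hM, sub_mul, one_mul, mul_sub, mul_one, Matrix.smul_mul, Matrix.mul_smul, hPP,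
        smul_smul, smul_smul, hcc, add_smul]
      abel
    have hPsymm : star M = M := by
      ext i j
      simp only [Matrix.star_apply, hM, Matrix.sub_apply, Matrix.smul_apply, Matrix.one_apply,
        hP, Matrix.vecMulVec_apply, smul_eq_mul, star_trivial]
      rw [mul_comm (v j) (v i)]
      congr 1
      by_cases hij : i = j <;> simp [hij, eq_comm]
    have hmem : M ∈ Matrix.orthogonalGroup (Fin n) ℝ := by
      rw [Matrix.mem_orthogonalGroup_iff, ← Matrix.conjTranspose_eq_transpose_of_trivial,
        ← Matrix.star_eq_conjTranspose, hPsymm]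
      exact hMM
    have hdot : c * (∑ k, v k * x k) = 1 := by
      have hkey : S = 2 * ∑ k, v k * x k := by
        have : ∑ i, v i ^ 2 = ∑ i, (2 * (v i * x i) + (y i ^ 2 - x i ^ 2)) := by
          refine Finset.sum_congr rfl fun i _ => ?_
          have : v i = x i - y i := rfl
          rw [this]; ring
        rw [hSdef, this, Finset.sum_add_distrib, Finset.sum_sub_distrib, ← h, ← Finset.mul_sum]
        ring
      have hd : ∑ k, v k * x k = S / 2 := by rw [hkey]; ring
      rw [hc, hd]
      field_simp
    have hPx : P.mulVec x = (∑ k, v k * x k) • v := by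
      funext i
      simp only [hP, Matrix.mulVec, dotProduct, Matrix.vecMulVec_apply, Pi.smul_apply,
        smul_eq_mul]
      rw [Finset.sum_mul]
      exact Finset.sum_congr rfl fun k _ => by ring
    refine ⟨⟨M, hmem⟩, ?_⟩
    show M.mulVec x = y
    rw [hM, Matrix.sub_mulVec, Matrix.one_mulVec, Matrix.smul_mulVec, hPx, smul_smul,
      hdot, one_smul, hv]
    funext i
    simp

lemma rearrange {u U v V : ENNReal} (hu : u ≤ U) (hv : v ≤ V) :
    u * V + U * v ≤ u * v + U * V := by
  obtain ⟨e, rfl⟩ := exists_add_of_le hu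
  obtain ⟨f, rfl⟩ := exists_add_of_le hv
  calc u * (v + f) + (u + e) * v
      = (u * v + u * f + (e * v + u * v)) + 0 := by ring
    _ ≤ (u * v + u * f + (e * v + u * v)) + e * f := by exact add_le_add le_rfl zero_le
    _ = u * v + (u + e) * (v + f) := by ring

end Stmt6Aux

open Stmt6Aux

theorem stmt_6 (n : ℕ) (ν : Measure (Fin n → ℝ)) [IsProbabilityMeasure ν]
    (hrot : ∀ U ∈ Matrix.orthogonalGroup (Fin n) ℝ, ν.map (Matrix.mulVec U) = ν)
    (A B : Set (Fin n → ℝ)) (hA : MeasurableSet A) (hB : MeasurableSet B)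
    (hAstar : ∀ x ∈ A, ∀ t ∈ Set.Icc (0 : ℝ) 1, t • x ∈ A)
    (hBstar : ∀ x ∈ B, ∀ t ∈ Set.Icc (0 : ℝ) 1, t • x ∈ B)
    (m : Measure (Matrix.orthogonalGroup (Fin n) ℝ)) [IsProbabilityMeasure m]
    (hm : ∀ V : Matrix.orthogonalGroup (Fin n) ℝ, m.map (fun U => V * U) = m) :
    (∫⁻ U : Matrix.orthogonalGroup (Fin n) ℝ,
        ν (A ∩ Matrix.mulVec (U : Matrix (Fin n) (Fin n) ℝ) '' B) ∂m) ≥ ν A * ν B := by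
  classical
  set q : (Fin n → ℝ) → ℝ := fun x => ∑ i, x i ^ 2 with hqdef
  -- generic facts about star-shaped measurable sets
  have main : ∀ S : Set (Fin n → ℝ), MeasurableSet S →
      (∀ x ∈ S, ∀ t ∈ Set.Icc (0 : ℝ) 1, t • x ∈ S) →
      (Measurable fun x => ∫⁻ V, S.indicator 1 (phi V x) ∂m) ∧
      (∀ x y, q y ≤ q x →
        (∫⁻ V, S.indicator 1 (phi V x) ∂m) ≤ (∫⁻ V, S.indicator 1 (phi V y) ∂m)) ∧
      (∫⁻ x, (∫⁻ V, S.indicator 1 (phi V x) ∂m) ∂ν = ν S) := by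
    intro S hS hstar
    have hFmeas : Measurable fun p : (Matrix.orthogonalGroup (Fin n) ℝ) × (Fin n → ℝ) =>
        S.indicator (1 : (Fin n → ℝ) → ENNReal) (phi p.1 p.2) :=
      measurable_ind measurable_phi hS
    refine ⟨?_, ?_, ?_⟩
    · exact Measurable.lintegral_prod_left hFmeas
    · -- monotonicity
      have hshrink : ∀ (x : Fin n → ℝ) (t : ℝ), t ∈ Set.Icc (0:ℝ) 1 →
          (∫⁻ V, S.indicator 1 (phi V x) ∂m) ≤ (∫⁻ V, S.indicator 1 (phi V (t • x)) ∂m) := by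
        intro x t ht
        refine lintegral_mono fun V => ?_
        rw [phi_smul]
        by_cases hmem : phi V x ∈ S
        · simp [hmem, hstar _ hmem t ht]
        · simp [hmem]
      have hinv : ∀ (W : (Matrix.orthogonalGroup (Fin n) ℝ)) (z : Fin n → ℝ),
          (∫⁻ V, S.indicator 1 (phi V ((W : Matrix (Fin n) (Fin n) ℝ).mulVec z)) ∂m)
            = ∫⁻ V, S.indicator 1 (phi V z) ∂m := by
        intro W z
        have hmeas : Measurable fun V : (Matrix.orthogonalGroup (Fin n) ℝ) =>
            S.indicator (1 : (Fin n → ℝ) → ENNReal)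
              (phi V ((W : Matrix (Fin n) (Fin n) ℝ).mulVec z)) :=
          measurable_ind (measurable_phi_right _) hS
        calc (∫⁻ V, S.indicator 1 (phi V ((W : Matrix (Fin n) (Fin n) ℝ).mulVec z)) ∂m)
            = ∫⁻ V, S.indicator 1
                (phi V ((W : Matrix (Fin n) (Fin n) ℝ).mulVec z)) ∂(m.map fun U => W * U) := by
              rw [hm]
          _ = ∫⁻ V, S.indicator 1
                (phi (W * V) ((W : Matrix (Fin n) (Fin n) ℝ).mulVec z)) ∂m := by
              rw [lintegral_map hmeas (measurable_mulLeft W)]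
          _ = ∫⁻ V, S.indicator 1 (phi V z) ∂m := by
              refine lintegral_congr fun V => ?_
              rw [phi_cancel]
      intro x y hqle
      have hqy : 0 ≤ q y := Finset.sum_nonneg fun i _ => sq_nonneg _
      by_cases hx0 : q x = 0
      · have hy0 : q y = 0 := le_antisymm (hx0 ▸ hqle) hqy
        rw [sq_sum_zero x hx0, sq_sum_zero y hy0]
      · have hqx : 0 < q x := lt_of_le_of_ne (le_trans hqy hqle) (Ne.symm hx0)
        set t : ℝ := Real.sqrt (q y / q x) with htdef
        have ht : t ∈ Set.Icc (0:ℝ) 1 := by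
          constructor
          · exact Real.sqrt_nonneg _
          · rw [htdef]
            rw [show (1:ℝ) = Real.sqrt 1 by simp]
            exact Real.sqrt_le_sqrt (by rw [div_le_one hqx]; exact hqle)
        have htq : ∑ i, (t • x) i ^ 2 = ∑ i, y i ^ 2 := by
          have h1 : ∑ i, (t • x) i ^ 2 = t ^ 2 * q x := by
            rw [hqdef, Finset.mul_sum]
            exact Finset.sum_congr rfl fun i _ => by simp [Pi.smul_apply, smul_eq_mul]; ring
          rw [h1, htdef, Real.sq_sqrt (div_nonneg hqy hqx.le), div_mul_cancel₀ _ hx0]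
        obtain ⟨W, hW⟩ := exists_orth (t • x) y htq
        calc (∫⁻ V, S.indicator 1 (phi V x) ∂m)
            ≤ ∫⁻ V, S.indicator 1 (phi V (t • x)) ∂m := hshrink x t ht
          _ = ∫⁻ V, S.indicator 1 (phi V ((W : Matrix (Fin n) (Fin n) ℝ).mulVec (t • x))) ∂m :=
              (hinv W (t • x)).symm
          _ = ∫⁻ V, S.indicator 1 (phi V y) ∂m := by rw [hW]
    · -- total integral
      rw [lintegral_lintegral_swap]
      · have hfix : ∀ V : (Matrix.orthogonalGroup (Fin n) ℝ), (∫⁻ x, S.indicator 1 (phi V x) ∂ν) = ν S := by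
          intro V
          have h3 : ν.map (phi V) S = ν S := by
            rw [phi_def, hrot _ (V⁻¹ : (Matrix.orthogonalGroup (Fin n) ℝ)).2]
          have h2 : ν (phi V ⁻¹' S) = ν S := by
            rw [← h3, Measure.map_apply (measurable_phi_left V) hS]
          calc (∫⁻ x, S.indicator 1 (phi V x) ∂ν)
              = ∫⁻ x, (phi V ⁻¹' S).indicator (1 : (Fin n → ℝ) → ENNReal) x ∂ν :=
                lintegral_congr fun x => by
                  by_cases h : phi V x ∈ S <;>
                    simp [h, Set.indicator_apply, Set.mem_preimage]
            _ = ν (phi V ⁻¹' S) := lintegral_indicator_one (measurable_phi_left V hS)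
            _ = ν S := h2
        calc (∫⁻ V, ∫⁻ x, S.indicator 1 (phi V x) ∂ν ∂m) = ∫⁻ _, ν S ∂m :=
              lintegral_congr hfix
          _ = ν S := by simp
      · exact (hFmeas.comp measurable_swap).aemeasurable
  obtain ⟨haMeas, haMono, haInt⟩ := main A hA hAstar
  obtain ⟨hbMeas, hbMono, hbInt⟩ := main B hB hBstar
  set a : (Fin n → ℝ) → ENNReal := fun x => ∫⁻ V, A.indicator 1 (phi V x) ∂m with hadef
  set b : (Fin n → ℝ) → ENNReal := fun x => ∫⁻ V, B.indicator 1 (phi V x) ∂m with hbdef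
  -- Step A: rewrite the measure of the intersection as an integral
  have stepA : ∀ U : (Matrix.orthogonalGroup (Fin n) ℝ), ν (A ∩ Matrix.mulVec (U : Matrix (Fin n) (Fin n) ℝ) '' B)
      = ∫⁻ x, A.indicator 1 x * B.indicator 1 (phi U x) ∂ν := by
    intro U
    have himg : Matrix.mulVec (U : Matrix (Fin n) (Fin n) ℝ) '' B = phi U ⁻¹' B := by
      ext z
      constructor
      · rintro ⟨w, hw, rfl⟩
        simpa [Set.mem_preimage, phi_mulVec] using hw
      · intro hz
        exact ⟨phi U z, hz, mulVec_phi U z⟩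
    rw [himg]
    have hmeas : MeasurableSet (A ∩ phi U ⁻¹' B) := hA.inter (measurable_phi_left U hB)
    rw [← lintegral_indicator_one hmeas, Set.inter_indicator_one]
    refine lintegral_congr fun x => ?_
    by_cases h1 : x ∈ A <;> by_cases h2 : phi U x ∈ B <;>
      simp [h1, h2, Set.indicator_apply, Set.mem_preimage]
  -- abbreviation for the LHS
  set I : ENNReal := ∫⁻ U : (Matrix.orthogonalGroup (Fin n) ℝ),
      ν (A ∩ Matrix.mulVec (U : Matrix (Fin n) (Fin n) ℝ) '' B) ∂m with hIdef
  -- Step B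
  have stepB : ∀ V : (Matrix.orthogonalGroup (Fin n) ℝ), I = ∫⁻ U, ∫⁻ x,
      A.indicator 1 (phi V x) * B.indicator 1 (phi U x) ∂ν ∂m := by
    intro V
    have hgmeas : ∀ U : (Matrix.orthogonalGroup (Fin n) ℝ), Measurable fun x =>
        A.indicator (1 : (Fin n → ℝ) → ENNReal) x * B.indicator 1 (phi U x) := by
      intro U
      exact (measurable_ind measurable_id hA).mul (measurable_ind (measurable_phi_left U) hB)
    have h1 : ∀ U : (Matrix.orthogonalGroup (Fin n) ℝ), (∫⁻ x, A.indicator 1 x * B.indicator 1 (phi U x) ∂ν)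
        = ∫⁻ x, A.indicator 1 (phi V x) * B.indicator 1 (phi (V * U) x) ∂ν := by
      intro U
      conv_lhs => rw [← hrot _ (V⁻¹ : (Matrix.orthogonalGroup (Fin n) ℝ)).2]
      rw [← phi_def, lintegral_map (hgmeas U) (measurable_phi_left V)]
      refine lintegral_congr fun x => ?_
      rw [phi_mul]
    have h2 : I = ∫⁻ U, ∫⁻ x,
        A.indicator 1 (phi V x) * B.indicator 1 (phi (V * U) x) ∂ν ∂m := by
      rw [hIdef]
      refine lintegral_congr fun U => ?_
      rw [stepA U, h1 U]
    rw [h2]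
    have hhmeas : Measurable fun U : (Matrix.orthogonalGroup (Fin n) ℝ) => ∫⁻ x,
        A.indicator (1 : (Fin n → ℝ) → ENNReal) (phi V x) * B.indicator 1 (phi U x) ∂ν := by
      apply Measurable.lintegral_prod_right
        (f := fun (U : (Matrix.orthogonalGroup (Fin n) ℝ)) (x : Fin n → ℝ) =>
          A.indicator (1 : (Fin n → ℝ) → ENNReal) (phi V x) * B.indicator 1 (phi U x))
      exact (measurable_ind ((measurable_phi_left V).comp measurable_snd) hA).mul
        (measurable_ind measurable_phi hB)
    calc (∫⁻ U, ∫⁻ x, A.indicator 1 (phi V x) * B.indicator 1 (phi (V * U) x) ∂ν ∂m)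
        = ∫⁻ U, (fun W : (Matrix.orthogonalGroup (Fin n) ℝ) => ∫⁻ x,
            A.indicator 1 (phi V x) * B.indicator 1 (phi W x) ∂ν) (V * U) ∂m := rfl
      _ = ∫⁻ U, ∫⁻ x, A.indicator 1 (phi V x) * B.indicator 1 (phi U x) ∂ν
            ∂(m.map fun U => V * U) := (lintegral_map hhmeas (measurable_mulLeft V)).symm
      _ = ∫⁻ U, ∫⁻ x, A.indicator 1 (phi V x) * B.indicator 1 (phi U x) ∂ν ∂m := by rw [hm]
  -- Step C: I = ∫ a * b
  have stepC : I = ∫⁻ x, a x * b x ∂ν := by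
    have hinner : ∀ V : (Matrix.orthogonalGroup (Fin n) ℝ), (∫⁻ U, ∫⁻ x,
        A.indicator 1 (phi V x) * B.indicator 1 (phi U x) ∂ν ∂m)
        = ∫⁻ x, A.indicator 1 (phi V x) * b x ∂ν := by
      intro V
      rw [lintegral_lintegral_swap]
      · refine lintegral_congr fun x => ?_
        rw [lintegral_const_mul _ (measurable_ind (measurable_phi_right x) hB)]
      · exact ((measurable_ind ((measurable_phi_left V).comp measurable_snd) hA).mul
          (measurable_ind measurable_phi hB)).aemeasurable
    have hconst : I = ∫⁻ _ : (Matrix.orthogonalGroup (Fin n) ℝ), I ∂m := by simp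
    calc I = ∫⁻ _ : (Matrix.orthogonalGroup (Fin n) ℝ), I ∂m := hconst
      _ = ∫⁻ V, ∫⁻ x, A.indicator 1 (phi V x) * b x ∂ν ∂m := by
          refine lintegral_congr fun V => ?_
          rw [← hinner V, ← stepB V]
      _ = ∫⁻ x, ∫⁻ V, A.indicator 1 (phi V x) * b x ∂m ∂ν := by
          rw [lintegral_lintegral_swap]
          exact ((measurable_ind measurable_phi hA).mul
            (hbMeas.comp measurable_snd)).aemeasurable
      _ = ∫⁻ x, a x * b x ∂ν := by
          refine lintegral_congr fun x => ?_
          rw [lintegral_mul_const _ (measurable_ind (measurable_phi_right x) hA)]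
  -- Step D: Chebyshev
  have hab : ∀ x y : Fin n → ℝ, a x * b y + a y * b x ≤ a x * b x + a y * b y := by
    intro x y
    rcases le_total (q y) (q x) with h | h
    · exact rearrange (haMono x y h) (hbMono x y h)
    · have := rearrange (haMono y x h) (hbMono y x h)
      calc a x * b y + a y * b x = a y * b x + a x * b y := by ring
        _ ≤ a y * b y + a x * b x := this
        _ = a x * b x + a y * b y := by ring
  set J : ENNReal := ∫⁻ x, a x * b x ∂ν with hJdef
  have habm : Measurable fun x => a x * b x := haMeas.mul hbMeas
  have e1 : (∫⁻ x, ∫⁻ y, (a x * b y + a y * b x) ∂ν ∂ν) = ν A * ν B + ν A * ν B := by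
    have hin : ∀ x, (∫⁻ y, (a x * b y + a y * b x) ∂ν) = a x * ν B + ν A * b x := by
      intro x
      rw [lintegral_add_left (hbMeas.const_mul _)]
      rw [lintegral_const_mul _ hbMeas, lintegral_mul_const _ haMeas, hbInt, haInt]
    calc (∫⁻ x, ∫⁻ y, (a x * b y + a y * b x) ∂ν ∂ν)
        = ∫⁻ x, (a x * ν B + ν A * b x) ∂ν := lintegral_congr hin
      _ = ν A * ν B + ν A * ν B := by
          rw [lintegral_add_left (haMeas.mul_const _), lintegral_mul_const _ haMeas,
            lintegral_const_mul _ hbMeas, haInt, hbInt]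
  have e2 : (∫⁻ x, ∫⁻ y, (a x * b x + a y * b y) ∂ν ∂ν) = J + J := by
    have hin : ∀ x, (∫⁻ y, (a x * b x + a y * b y) ∂ν) = a x * b x + J := by
      intro x
      rw [lintegral_add_left measurable_const]
      simp [hJdef]
    calc (∫⁻ x, ∫⁻ y, (a x * b x + a y * b y) ∂ν ∂ν)
        = ∫⁻ x, (a x * b x + J) ∂ν := lintegral_congr hin
      _ = J + J := by
          rw [lintegral_add_right _ measurable_const]
          simp [hJdef]
  have hle : ν A * ν B + ν A * ν B ≤ J + J := by
    rw [← e1, ← e2]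
    exact lintegral_mono fun x => lintegral_mono fun y => hab x y
  have hfinal : ν A * ν B ≤ J := by
    have h2 : 2 * (ν A * ν B) ≤ 2 * J := by
      rw [two_mul, two_mul]; exact hle
    exact (ENNReal.mul_le_mul_iff_right (by norm_num) (by norm_num)).mp h2
  calc ν A * ν B ≤ J := hfinal
    _ = I := stepC.symm
    _ = _ := rfl
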